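/- Let (p, l) be an affine-normalized realization of an incidence structure S = (P, L, I) with pin set Q ⊆ P, and suppose this pinned realization is infinitesimally rigid. Then every pinned analytic motion (p_t, l_t) of (p, l) is constant: p_t = p and l_t = l for all t ∈ ℝ. That is, every infinitesimally rigid projective framework is rigid. -/

import Mathlib

lemma aux_iteratedDeriv_const : ∀ (n : ℕ) (c : ℝ),
    iteratedDeriv (n+1) (fun _ : ℝ => c) = fun _ => (0:ℝ) := by
  intro n
  induction n with
  | zero => intro c; funext x; simp [iteratedDeriv_succ', deriv_const']
  | succ n ih =>
    intro c
    rw [iteratedDeriv_succ', deriv_const']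
    exact ih 0

lemma binom_aux (n : ℕ) (a b : ℕ → ℝ) :
    ((∑ k ∈ Finset.range (n+1), (n.choose k : ℝ) * (a (k+1) * b (n-k))) +
    (∑ k ∈ Finset.range (n+1), (n.choose k : ℝ) * (a k * b (n-k+1)))) =
    ∑ k ∈ Finset.range (n+2), ((n+1).choose k : ℝ) * (a k * b (n+1-k)) := by
  have h1 : ∀ k ∈ Finset.range (n+1), (n.choose k : ℝ) * (a k * b (n-k+1))
      = (n.choose k : ℝ) * (a k * b (n+1-k)) := by
    intro k hk
    rw [Finset.mem_range] at hk
    have : n - k + 1 = n + 1 - k := by omega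
    rw [this]
  rw [Finset.sum_congr rfl h1]
  rw [Finset.sum_range_succ' (fun k => ((n+1).choose k : ℝ) * (a k * b (n+1-k))) (n+1)]
  rw [Finset.sum_range_succ' (fun k => ((n).choose k : ℝ) * (a k * b (n+1-k))) n]
  simp only [Nat.choose_succ_succ, Nat.succ_sub_succ, Nat.choose_zero_right, Nat.cast_one,
    Nat.cast_add, Nat.sub_zero, add_mul, Finset.sum_add_distrib, one_mul]
  rw [Finset.sum_range_succ (fun k => ((n).choose (k+1) : ℝ) * (a (k+1) * b (n-k))) n]
  simp [Nat.choose_succ_self]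
  ring

lemma aux_analytic_contDiffOn {f : ℝ → ℝ} (hf : ∀ t, AnalyticAt ℝ f t) (n : ℕ) :
    ContDiffOn ℝ n f Set.univ :=
  (contDiff_iff_contDiffAt.mpr fun t => (hf t).contDiffAt).contDiffOn

lemma aux_deriv_analytic {f : ℝ → ℝ} (hf : ∀ t, AnalyticAt ℝ f t) :
    ∀ t, AnalyticAt ℝ (deriv f) t :=
  fun t => (AnalyticOnNhd.deriv (fun y _ => hf y)) t (Set.mem_univ t)

lemma aux_leibniz : ∀ (n : ℕ) (f g : ℝ → ℝ), (∀ t, AnalyticAt ℝ f t) → (∀ t, AnalyticAt ℝ g t) →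
    ∀ x : ℝ, iteratedDeriv n (fun y => f y * g y) x =
      ∑ k ∈ Finset.range (n+1),
        (n.choose k : ℝ) * (iteratedDeriv k f x * iteratedDeriv (n-k) g x) := by
  intro n
  induction n with
  | zero => intro f g hf hg x; simp
  | succ n ih =>
    intro f g hf hg x
    have hf' := aux_deriv_analytic hf
    have hg' := aux_deriv_analytic hg
    have hder : deriv (fun y => f y * g y) = fun y => deriv f y * g y + f y * deriv g y :=
      funext fun y => deriv_mul ((hf y).differentiableAt) ((hg y).differentiableAt)
    rw [iteratedDeriv_succ', hder]
    have hadd : iteratedDeriv n (fun y => deriv f y * g y + f y * deriv g y) x =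
        iteratedDeriv n (fun y => deriv f y * g y) x +
        iteratedDeriv n (fun y => f y * deriv g y) x := by
      rw [show (fun y => deriv f y * g y + f y * deriv g y)
          = (fun y => deriv f y * g y) + (fun y => f y * deriv g y) from rfl,
        ← iteratedDerivWithin_univ, ← iteratedDerivWithin_univ, ← iteratedDerivWithin_univ]
      exact iteratedDerivWithin_add (Set.mem_univ x) uniqueDiffOn_univ
        ((aux_analytic_contDiffOn (fun t => (hf' t).mul (hg t)) n).contDiffWithinAt (Set.mem_univ x))
        ((aux_analytic_contDiffOn (fun t => (hf t).mul (hg' t)) n).contDiffWithinAt (Set.mem_univ x))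
    rw [hadd, ih (deriv f) g hf' hg x, ih f (deriv g) hf hg' x]
    simp only [← iteratedDeriv_succ']
    exact binom_aux n (fun k => iteratedDeriv k f x) (fun k => iteratedDeriv k g x)

lemma aux_const_of_derivs {f : ℝ → ℝ} (hf : ∀ t, AnalyticAt ℝ f t)
    (hd : ∀ n : ℕ, iteratedDeriv (n+1) f 0 = 0) (t : ℝ) : f t = f 0 := by
  have hOn : AnalyticOnNhd ℝ f Set.univ := fun x _ => hf x
  have hgOn : AnalyticOnNhd ℝ (fun _ : ℝ => f 0) Set.univ := fun x _ => analyticAt_const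
  have hev : f =ᶠ[nhds (0:ℝ)] fun _ => f 0 := by
    obtain ⟨q, hq⟩ := hf 0
    have hcoeff : ∀ n : ℕ, n ≠ 0 → q.coeff n = 0 := by
      intro n hn
      obtain ⟨m, rfl⟩ := Nat.exists_eq_succ_of_ne_zero hn
      obtain ⟨r, hball⟩ := hq
      have h1 := hball.factorial_smul (1:ℝ) (m+1)
      rw [← iteratedDeriv_eq_iteratedFDeriv, hd m] at h1
      have h2 : ((m+1).factorial : ℝ) * q.coeff (m+1) = 0 := by
        rw [← nsmul_eq_mul]; exact h1
      have h3 : ((m+1).factorial : ℝ) ≠ 0 := by positivity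
      show q.coeff (m+1) = 0
      exact (mul_eq_zero.mp h2).resolve_left h3
    have hq0 : q.coeff 0 = f 0 := hq.coeff_zero 1
    have := hasFPowerSeriesAt_iff.mp hq
    filter_upwards [this] with z hz
    have hsum : HasSum (fun n : ℕ => z ^ n • q.coeff n) (f 0) := by
      have : HasSum (fun n : ℕ => z ^ n • q.coeff n) (z ^ 0 • q.coeff 0) := by
        apply hasSum_single
        intro b hb
        simp [hcoeff b hb]
      simpa [hq0] using this
    have : f (0 + z) = f 0 := hz.unique hsum
    simpa using this
  exact hOn.eqOn_of_preconnected_of_eventuallyEq hgOn isPreconnected_univ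
    (Set.mem_univ 0) hev (Set.mem_univ t)

open Matrix

/-- an infinitesimally rigid pinned affine-normalized realization is
rigid: every pinned real-analytic motion is constant. -/
theorem infRigid_implies_rigid
    {P L : Type*} [Fintype P] [Fintype L] (I : Set (P × L))
    (p : P → Fin 2 → ℝ) (l : L → Fin 2 → ℝ)
    (hreal : ∀ ij ∈ I, p ij.1 ⬝ᵥ l ij.2 = -1)
    (Q : Set P)
    (hrigid : ∀ (p' : P → Fin 2 → ℝ) (l' : L → Fin 2 → ℝ),
      (∀ ij ∈ I, p ij.1 ⬝ᵥ l' ij.2 + p' ij.1 ⬝ᵥ l ij.2 = 0) →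
      (∀ i ∈ Q, p' i = 0) → p' = 0 ∧ l' = 0)
    (pt : ℝ → P → Fin 2 → ℝ) (lt : ℝ → L → Fin 2 → ℝ)
    (han_p : ∀ i, ∀ t : ℝ, AnalyticAt ℝ (fun s => pt s i) t)
    (han_l : ∀ j, ∀ t : ℝ, AnalyticAt ℝ (fun s => lt s j) t)
    (h0p : pt 0 = p) (h0l : lt 0 = l)
    (hmot : ∀ t, ∀ ij ∈ I, pt t ij.1 ⬝ᵥ lt t ij.2 = -1)
    (hpin : ∀ t, ∀ i ∈ Q, pt t i = p i) :
    ∀ t : ℝ, pt t = p ∧ lt t = l := by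
  have hFa : ∀ i (c : Fin 2) (t : ℝ), AnalyticAt ℝ (fun s => pt s i c) t := fun i c t =>
    ((ContinuousLinearMap.proj c : (Fin 2 → ℝ) →L[ℝ] ℝ).analyticAt _).comp (han_p i t)
  have hGa : ∀ j (c : Fin 2) (t : ℝ), AnalyticAt ℝ (fun s => lt s j c) t := fun j c t =>
    ((ContinuousLinearMap.proj c : (Fin 2 → ℝ) →L[ℝ] ℝ).analyticAt _).comp (han_l j t)
  have key : ∀ k : ℕ, (∀ i c, iteratedDeriv (k+1) (fun s => pt s i c) 0 = 0) ∧
      (∀ j c, iteratedDeriv (k+1) (fun s => lt s j c) 0 = 0) := by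
    intro k
    induction k using Nat.strong_induction_on with
    | _ k IH =>
    let p' : P → Fin 2 → ℝ := fun i c => iteratedDeriv (k+1) (fun s => pt s i c) 0
    let l' : L → Fin 2 → ℝ := fun j c => iteratedDeriv (k+1) (fun s => lt s j c) 0
    have hflex : ∀ ij ∈ I, p ij.1 ⬝ᵥ l' ij.2 + p' ij.1 ⬝ᵥ l ij.2 = 0 := by
      intro ij hij
      have hsumconst : (fun s => pt s ij.1 0 * lt s ij.2 0 + pt s ij.1 1 * lt s ij.2 1)
          = fun _ => (-1:ℝ) := funext fun s => by
        simpa [dotProduct, Fin.sum_univ_two] using hmot s ij hij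
      have hderiv0 : iteratedDeriv (k+1)
          (fun s => pt s ij.1 0 * lt s ij.2 0 + pt s ij.1 1 * lt s ij.2 1) 0 = 0 := by
        rw [hsumconst, aux_iteratedDeriv_const]
      have hsplit : iteratedDeriv (k+1)
          (fun s => pt s ij.1 0 * lt s ij.2 0 + pt s ij.1 1 * lt s ij.2 1) 0 =
          iteratedDeriv (k+1) (fun s => pt s ij.1 0 * lt s ij.2 0) 0 +
          iteratedDeriv (k+1) (fun s => pt s ij.1 1 * lt s ij.2 1) 0 := by
        rw [show (fun s => pt s ij.1 0 * lt s ij.2 0 + pt s ij.1 1 * lt s ij.2 1)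
            = (fun s => pt s ij.1 0 * lt s ij.2 0) + (fun s => pt s ij.1 1 * lt s ij.2 1)
            from rfl,
          ← iteratedDerivWithin_univ, ← iteratedDerivWithin_univ, ← iteratedDerivWithin_univ]
        exact iteratedDerivWithin_add (Set.mem_univ 0) uniqueDiffOn_univ
          ((aux_analytic_contDiffOn (fun t => (hFa ij.1 0 t).mul (hGa ij.2 0 t)) (k+1)).contDiffWithinAt (Set.mem_univ 0))
          ((aux_analytic_contDiffOn (fun t => (hFa ij.1 1 t).mul (hGa ij.2 1 t)) (k+1)).contDiffWithinAt (Set.mem_univ 0))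
      have hA : ∀ c : Fin 2, iteratedDeriv (k+1) (fun s => pt s ij.1 c * lt s ij.2 c) 0 =
          p ij.1 c * l' ij.2 c + p' ij.1 c * l ij.2 c := by
        intro c
        rw [aux_leibniz (k+1) _ _ (hFa ij.1 c) (hGa ij.2 c) 0, Finset.sum_range_succ]
        have hmid : ∑ m ∈ Finset.range (k+1), ((k+1).choose m : ℝ) *
            (iteratedDeriv m (fun s => pt s ij.1 c) 0 *
              iteratedDeriv (k+1-m) (fun s => lt s ij.2 c) 0)
            = ((k+1).choose 0 : ℝ) * (iteratedDeriv 0 (fun s => pt s ij.1 c) 0 *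
              iteratedDeriv (k+1) (fun s => lt s ij.2 c) 0) := by
          apply Finset.sum_eq_single_of_mem 0 (Finset.mem_range.mpr (Nat.succ_pos k))
          intro m hm hm0
          obtain ⟨m', rfl⟩ := Nat.exists_eq_succ_of_ne_zero hm0
          rw [Finset.mem_range] at hm
          rw [(IH m' (by omega)).1 ij.1 c]
          ring
        rw [hmid]
        have e1 : iteratedDeriv 0 (fun s => pt s ij.1 c) 0 = p ij.1 c := by
          simp [iteratedDeriv_zero]
          rw [h0p]
        have e2 : iteratedDeriv (k+1-(k+1)) (fun s => lt s ij.2 c) 0 = l ij.2 c := by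
          simp [iteratedDeriv_zero]
          rw [h0l]
        rw [e1, e2]
        simp only [Nat.choose_zero_right, Nat.choose_self, Nat.cast_one, one_mul]
        rfl
      have hcomb : iteratedDeriv (k+1) (fun s => pt s ij.1 0 * lt s ij.2 0) 0 +
          iteratedDeriv (k+1) (fun s => pt s ij.1 1 * lt s ij.2 1) 0 = 0 := by
        rw [← hsplit]; exact hderiv0
      rw [hA 0, hA 1] at hcomb
      simp only [dotProduct, Fin.sum_univ_two]
      linarith
    have hpinned : ∀ i ∈ Q, p' i = 0 := by
      intro i hi
      funext c
      show iteratedDeriv (k+1) (fun s => pt s i c) 0 = 0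
      rw [show (fun s => pt s i c) = fun _ => p i c from funext fun s => by rw [hpin s i hi],
        aux_iteratedDeriv_const]
    obtain ⟨h1, h2⟩ := hrigid p' l' hflex hpinned
    exact ⟨fun i c => congrFun (congrFun h1 i) c, fun j c => congrFun (congrFun h2 j) c⟩
  intro t
  constructor
  · funext i c
    have := aux_const_of_derivs (hFa i c) (fun n => (key n).1 i c) t
    rw [this, h0p]
  · funext j c
    have := aux_const_of_derivs (hGa j c) (fun n => (key n).2 j c) t
    rw [this, h0l]
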